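/- In the set-disjointness lower-bound graph G, if a_i = b_j (the two ℓ-bit strings coincide), then dist_G(u_i, v_j) = 3. -/
import Mathlib


namespace SetDisjointness

/-- Vertices of the set-disjointness lower-bound graph:
`uA i`, `vB j`, `wC m`, `xD m`, and the two special vertices `u*`, `v*`. -/
abbrev Vert (α β ℓ : ℕ) := (Fin α ⊕ Fin β) ⊕ ((Fin ℓ ⊕ Fin ℓ) ⊕ Bool)

variable {α β ℓ : ℕ}

def uA (i : Fin α) : Vert α β ℓ := Sum.inl (Sum.inl i)
def vB (j : Fin β) : Vert α β ℓ := Sum.inl (Sum.inr j)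
def wC (m : Fin ℓ) : Vert α β ℓ := Sum.inr (Sum.inl (Sum.inl m))
def xD (m : Fin ℓ) : Vert α β ℓ := Sum.inr (Sum.inl (Sum.inr m))
def ustar : Vert α β ℓ := Sum.inr (Sum.inr false)
def vstar : Vert α β ℓ := Sum.inr (Sum.inr true)

/-- One direction of the edge relation of the set-disjointness lower-bound graph:
`u_i ~ w_m` iff the `m`-th bit of `a_i` is 1; `u_i ~ x_m` iff it is 0;
`v_j ~ w_m` iff the `m`-th bit of `b_j` is 0; `v_j ~ x_m` iff it is 1;
`u*` is adjacent to all of `V_A ∪ V_C ∪ V_D`; `v*` to all of `V_B ∪ V_C ∪ V_D`. -/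
def sdRel (a : Fin α → Fin ℓ → Bool) (b : Fin β → Fin ℓ → Bool) :
    Vert α β ℓ → Vert α β ℓ → Prop
  | Sum.inl (Sum.inl i), Sum.inr (Sum.inl (Sum.inl m)) => a i m = true
  | Sum.inl (Sum.inl i), Sum.inr (Sum.inl (Sum.inr m)) => a i m = false
  | Sum.inl (Sum.inr j), Sum.inr (Sum.inl (Sum.inl m)) => b j m = false
  | Sum.inl (Sum.inr j), Sum.inr (Sum.inl (Sum.inr m)) => b j m = true
  | Sum.inr (Sum.inr false), Sum.inl (Sum.inl _) => True
  | Sum.inr (Sum.inr false), Sum.inr (Sum.inl _) => True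
  | Sum.inr (Sum.inr true), Sum.inl (Sum.inr _) => True
  | Sum.inr (Sum.inr true), Sum.inr (Sum.inl _) => True
  | _, _ => False

/-- The set-disjointness lower-bound graph. -/
def SDGraph (a : Fin α → Fin ℓ → Bool) (b : Fin β → Fin ℓ → Bool) :
    SimpleGraph (Vert α β ℓ) :=
  SimpleGraph.fromRel (sdRel a b)

/-- If the bit strings `a_i` and `b_j` coincide, then `dist_G(u_i, v_j) = 3`. -/
theorem sd_dist_eq_three (hl : 1 ≤ ℓ) (a : Fin α → Fin ℓ → Bool)
    (b : Fin β → Fin ℓ → Bool) (i : Fin α) (j : Fin β) (hij : a i = b j) :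
    (SDGraph a b).dist (uA i) (vB j) = 3 := by
  set G := SDGraph a b with hG
  have m : Fin ℓ := ⟨0, hl⟩
  -- middle vertex adjacent to uA i
  set c : Vert α β ℓ := if a i m then wC m else xD m with hc
  have h1 : G.Adj (uA i) c := by
    rw [hc]
    by_cases h : a i m = true <;>
      simp [h, hG, SDGraph, SimpleGraph.fromRel_adj, sdRel, uA, wC, xD]
  have h2 : G.Adj c (vstar : Vert α β ℓ) := by
    rw [hc]
    by_cases h : a i m = true <;>
      simp [h, hG, SDGraph, SimpleGraph.fromRel_adj, sdRel, wC, xD, vstar]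
  have h3 : G.Adj (vstar : Vert α β ℓ) (vB j) := by
    simp [hG, SDGraph, SimpleGraph.fromRel_adj, sdRel, vstar, vB]
  let p : G.Walk (uA i) (vB j) := .cons h1 (.cons h2 (.cons h3 .nil))
  have hle : G.dist (uA i) (vB j) ≤ 3 := by
    have := SimpleGraph.dist_le p
    simpa [p] using this
  have hreach : G.Reachable (uA i) (vB j) := ⟨p⟩
  have hge : 3 ≤ G.dist (uA i) (vB j) := by
    by_contra hcon
    push_neg at hcon
    obtain ⟨q, hq⟩ := hreach.exists_walk_length_eq_dist
    rw [← hq] at hcon; clear hq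
    cases q with
    | cons h1' q =>
      cases q with
      | nil =>
        simp [hG, SDGraph, SimpleGraph.fromRel_adj, sdRel, uA, vB] at h1'
      | cons h2' q =>
        cases q with
        | nil =>
          rename_i mid
          rcases mid with (⟨i'⟩|⟨j'⟩) | (⟨m'⟩|⟨m'⟩) | (_|_) <;>
            simp [hG, SDGraph, SimpleGraph.fromRel_adj, sdRel, uA, vB, hij] at h1' h2' <;>
            simp_all
        | cons h3' q =>
          simp at hcon; omega
  exact le_antisymm hle hge

end SetDisjointness
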